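/- Let Γ be a group generated by a finite symmetric set S = S⁻¹ ⊆ Γ. Then for every finite nonempty subset D ⊆ Γ, the isoperimetric inequality |∂_S D| / |D| ≥ sup_{r ∈ ℕ, r ≥ 1} (1/r)·(1 − |D|/γ_S(r)) holds; equivalently, r·γ_S(r)·|∂_S D| ≥ |D|·(γ_S(r) − |D|) for every integer r ≥ 1. -/

import Mathlib

open scoped Pointwise

variable {G : Type*} [Group G] [DecidableEq G]

/-- The ball of radius `r` in the word metric: elements of `G` expressible as
a product of at most `r` elements of `S`. -/
def wordBall (S : Finset G) : ℕ → Finset G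
  | 0 => {1}
  | r + 1 => wordBall S r ∪ S * wordBall S r

/-- The inner boundary of a finite set `D` with respect to the generating set `S`. -/
def innerBoundary (S D : Finset G) : Finset G :=
  D.filter fun x => ∃ s ∈ S, s * x ∉ D

lemma one_mem_wordBall (S : Finset G) : ∀ r, (1 : G) ∈ wordBall S r
  | 0 => Finset.mem_singleton_self 1
  | r + 1 => Finset.mem_union_left _ (one_mem_wordBall S r)

lemma sdiff_smul_subset (S D : Finset G) (hsymm : ∀ s ∈ S, s⁻¹ ∈ S)
    {s : G} (hs : s ∈ S) : D \ s • D ⊆ innerBoundary S D := by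
  intro x hx
  rw [Finset.mem_sdiff] at hx
  refine Finset.mem_filter.2 ⟨hx.1, s⁻¹, hsymm s hs, fun h => hx.2 ?_⟩
  exact Finset.mem_smul_finset.2 ⟨s⁻¹ * x, h, mul_inv_cancel_left s x⟩

lemma card_sdiff_le (S D : Finset G) (hsymm : ∀ s ∈ S, s⁻¹ ∈ S) :
    ∀ r, ∀ g ∈ wordBall S r, (D \ g • D).card ≤ r * (innerBoundary S D).card := by
  intro r
  induction r with
  | zero =>
    intro g hg
    rw [wordBall, Finset.mem_singleton] at hg
    subst hg
    simp
  | succ r ih =>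
    intro g hg
    rw [wordBall, Finset.mem_union] at hg
    rcases hg with hg | hg
    · exact (ih g hg).trans (Nat.mul_le_mul_right _ (Nat.le_succ r))
    · obtain ⟨s, hs, h, hh, rfl⟩ := Finset.mem_mul.1 hg
      have hsub : D \ (s * h) • D ⊆ (D \ s • D) ∪ s • (D \ h • D) := by
        intro x hx
        rw [Finset.mem_sdiff] at hx
        by_cases hxs : x ∈ s • D
        · obtain ⟨y, hy, rfl⟩ := Finset.mem_smul_finset.1 hxs
          refine Finset.mem_union_right _ (Finset.mem_smul_finset.2 ⟨y, ?_, rfl⟩)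
          refine Finset.mem_sdiff.2 ⟨hy, fun hyh => hx.2 ?_⟩
          obtain ⟨z, hz, rfl⟩ := Finset.mem_smul_finset.1 hyh
          exact Finset.mem_smul_finset.2 ⟨z, hz, mul_smul s h z⟩
        · exact Finset.mem_union_left _ (Finset.mem_sdiff.2 ⟨hx.1, hxs⟩)
      calc (D \ (s * h) • D).card
          ≤ ((D \ s • D) ∪ s • (D \ h • D)).card := Finset.card_le_card hsub
        _ ≤ (D \ s • D).card + (s • (D \ h • D)).card := Finset.card_union_le _ _
        _ = (D \ s • D).card + (D \ h • D).card := by rw [Finset.card_smul_finset]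
        _ ≤ (innerBoundary S D).card + r * (innerBoundary S D).card := by
            exact Nat.add_le_add
              (Finset.card_le_card (sdiff_smul_subset S D hsymm hs)) (ih h hh)
        _ = (r + 1) * (innerBoundary S D).card := by ring

lemma count_le (D B : Finset G) (x : G) :
    (B.filter fun g => x ∈ g • D).card ≤ D.card := by
  apply Finset.card_le_card_of_injOn (fun g => g⁻¹ * x)
  · intro g hg
    rw [Finset.mem_coe, Finset.mem_filter] at hg
    obtain ⟨y, hy, hxy⟩ := Finset.mem_smul_finset.1 hg.2
    show g⁻¹ * x ∈ D
    rwa [← hxy, smul_eq_mul, inv_mul_cancel_left]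
  · intro g _ h _ hgh
    exact inv_injective (mul_right_cancel hgh)

lemma main_nat (S : Finset G) (hsymm : ∀ s ∈ S, s⁻¹ ∈ S) (D : Finset G) (r : ℕ) :
    (wordBall S r).card * D.card ≤
      D.card * D.card + (wordBall S r).card * (r * (innerBoundary S D).card) := by
  set B := wordBall S r with hB
  have h1 : ∀ g ∈ B, D.card ≤ (D ∩ g • D).card + r * (innerBoundary S D).card := by
    intro g hg
    have h2 := Finset.card_inter_add_card_sdiff D (g • D)
    have h3 := card_sdiff_le S D hsymm r g hg
    omega
  have h4 : (∑ g ∈ B, (D ∩ g • D).card) ≤ D.card * D.card := by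
    have heq : ∀ g : G, (D ∩ g • D).card = (D.filter fun x => x ∈ g • D).card := by
      intro g
      rw [Finset.filter_mem_eq_inter]
    calc (∑ g ∈ B, (D ∩ g • D).card)
        = ∑ g ∈ B, ∑ x ∈ D, (if x ∈ g • D then 1 else 0) := by
          simp only [heq, Finset.card_filter]
      _ = ∑ x ∈ D, ∑ g ∈ B, (if x ∈ g • D then 1 else 0) := Finset.sum_comm
      _ = ∑ x ∈ D, (B.filter fun g => x ∈ g • D).card := by
          simp only [Finset.card_filter]
      _ ≤ ∑ x ∈ D, D.card := Finset.sum_le_sum fun x _ => count_le D B x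
      _ = D.card * D.card := by rw [Finset.sum_const, smul_eq_mul]
  calc B.card * D.card = ∑ _g ∈ B, D.card := by rw [Finset.sum_const, smul_eq_mul]
    _ ≤ ∑ g ∈ B, ((D ∩ g • D).card + r * (innerBoundary S D).card) :=
        Finset.sum_le_sum h1
    _ = (∑ g ∈ B, (D ∩ g • D).card) + B.card * (r * (innerBoundary S D).card) := by
        rw [Finset.sum_add_distrib, Finset.sum_const, smul_eq_mul]
    _ ≤ D.card * D.card + B.card * (r * (innerBoundary S D).card) :=
        Nat.add_le_add_right h4 _

theorem stmt1 (S : Finset G)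
    (hsymm : ∀ s ∈ S, s⁻¹ ∈ S) (hgen : Subgroup.closure (S : Set G) = ⊤)
    (D : Finset G) (hD : D.Nonempty) :
    (⨆ r : {r : ℕ // 1 ≤ r},
        (1 / ((r : ℕ) : ℝ)) * (1 - (D.card : ℝ) / ((wordBall S (r : ℕ)).card : ℝ)))
      ≤ ((innerBoundary S D).card : ℝ) / (D.card : ℝ) := by
  have hne : Nonempty {r : ℕ // 1 ≤ r} := ⟨⟨1, le_refl 1⟩⟩
  apply ciSup_le
  rintro ⟨r, hr⟩
  simp only
  have hγ : 0 < (wordBall S r).card := Finset.card_pos.2 ⟨1, one_mem_wordBall S r⟩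
  have hn : 0 < D.card := Finset.card_pos.2 hD
  have key := main_nat S hsymm D r
  have hγR : (0:ℝ) < ((wordBall S r).card : ℝ) := by exact_mod_cast hγ
  have hnR : (0:ℝ) < (D.card : ℝ) := by exact_mod_cast hn
  have hrR : (0:ℝ) < (r : ℝ) := by exact_mod_cast hr
  have keyR : ((wordBall S r).card : ℝ) * D.card ≤
      (D.card : ℝ) * D.card +
        ((wordBall S r).card : ℝ) * ((r : ℝ) * ((innerBoundary S D).card : ℝ)) := by
    exact_mod_cast key
  have heq : (1 / (r : ℝ)) * (1 - (D.card : ℝ) / ((wordBall S r).card : ℝ)) =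
      (((wordBall S r).card : ℝ) - D.card) / ((r : ℝ) * ((wordBall S r).card : ℝ)) := by
    field_simp
  rw [heq, div_le_div_iff₀ (by positivity) hnR]
  nlinarith [keyR]
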